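/- Let e ≥ 4 be odd and χ a Dirichlet character modulo 2^e of conductor 2^s with 3 ≤ s ≤ (e-3)/2. Write χ(5) = e(a/2^{s-2}) for a unique odd a ∈ [1, 2^{s-2}), and define ψ mod 2^e by ψ(-1)=1 and ψ(5) = e(-a/2^{s-1}). Then χψ² has conductor at most 4, cond(ψ) = cond(χψ) = 2^{s+1}, and ord₂(cond(ψ)) + ord₂(cond(χψ)) = 2s + 2 < e. -/

import Mathlib

lemma five_pow_int (k : ℕ) : ∃ u : ℤ, Odd u ∧ (5:ℤ)^(2^k) = 1 + 2^(k+2) * u := by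
  induction k with
  | zero => exact ⟨1, odd_one, by norm_num⟩
  | succ k ih =>
    obtain ⟨u, hu, h⟩ := ih
    refine ⟨u + 2^(k+1) * u^2, ?_, ?_⟩
    · rcases hu with ⟨m, hm⟩
      exact ⟨m + 2^k * u^2, by subst hm; ring⟩
    · have : (5:ℤ)^(2^(k+1)) = ((5:ℤ)^(2^k))^2 := by
        rw [← pow_mul, pow_succ, mul_comm]
      rw [this, h]; ring

lemma five_pow_eq_one_iff' (t j : ℕ) : (5 : ZMod (2^t))^j = 1 ↔ 2^(t-2) ∣ j := by
  rcases le_or_gt t 2 with ht | ht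
  · have h5 : (5 : ZMod (2^t)) = 1 := by
      interval_cases t
      · exact Subsingleton.elim (α := ZMod 1) _ _
      · decide
      · decide
    have : t - 2 = 0 := by omega
    simp [h5, this]
  · have h1 : (5 : ZMod (2^t))^(2^(t-2)) = 1 := by
      obtain ⟨u, _, hu⟩ := five_pow_int (t-2)
      have h2 : t - 2 + 2 = t := by omega
      rw [h2] at hu
      have := congrArg (fun z : ℤ => (z : ZMod (2^t))) hu
      push_cast at this
      rw [this]
      have hz : ((2:ZMod (2^t)))^t = 0 := by
        have := ZMod.natCast_self (2^t)
        push_cast at this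
        exact this
      rw [hz]; ring
    have h2 : ¬ ((5 : ZMod (2^t))^(2^(t-3)) = 1) := by
      obtain ⟨u, hu, hup⟩ := five_pow_int (t-3)
      have h3 : t - 3 + 2 = t - 1 := by omega
      intro hcon
      rw [h3] at hup
      have := congrArg (fun z : ℤ => (z : ZMod (2^t))) hup
      push_cast at this
      rw [hcon] at this
      have hz : ((2:ZMod (2^t)))^(t-1) * (u : ZMod (2^t)) = 0 := by
        linear_combination -this
      have hdvd : ((2:ℤ))^t ∣ 2^(t-1) * u := by
        have : (((2:ℤ)^(t-1) * u : ℤ) : ZMod (2^t)) = 0 := by push_cast; exact hz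
        have h4 := (ZMod.intCast_zmod_eq_zero_iff_dvd _ _).mp this
        exact_mod_cast h4
      obtain ⟨c, hc⟩ := hdvd
      have ht1 : (2:ℤ)^t = 2^(t-1) * 2 := by
        rw [← pow_succ]; congr 1; omega
      rw [ht1, mul_assoc] at hc
      have : (u:ℤ) = 2 * c := mul_left_cancel₀ (by positivity) hc
      rcases hu with ⟨d, hd⟩
      omega
    have hord : orderOf (5 : ZMod (2^t)) = 2^(t-2) := by
      have hd1 : orderOf (5 : ZMod (2^t)) ∣ 2^(t-2) := orderOf_dvd_of_pow_eq_one h1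
      obtain ⟨i, hi, hie⟩ := (Nat.dvd_prime_pow Nat.prime_two).mp hd1
      have : ¬ (i ≤ t - 3) := by
        intro hle
        exact h2 (orderOf_dvd_iff_pow_eq_one.mp (hie ▸ pow_dvd_pow 2 hle))
      have : i = t - 2 := by omega
      rw [hie, this]
    rw [← hord]
    exact ⟨fun h => orderOf_dvd_of_pow_eq_one h, fun h => orderOf_dvd_iff_pow_eq_one.mp h⟩

open Complex in
lemma root_pow_eq_one_iff (b : ℤ) (hb : Odd b) (m k : ℕ) :
    (Complex.exp (2 * Real.pi * Complex.I * (b:ℂ) / (2:ℂ)^m))^(2^k) = 1 ↔ m ≤ k := by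
  have h2 : ((2:ℂ)^m) ≠ 0 := pow_ne_zero _ two_ne_zero
  have hpi : (2 * (Real.pi:ℂ) * Complex.I) ≠ 0 := by
    simp [Real.pi_ne_zero, Complex.I_ne_zero]
  rw [← Complex.exp_nat_mul, Complex.exp_eq_one_iff]
  constructor
  · rintro ⟨n, hn⟩
    by_contra hlt
    push_neg at hlt
    have key : ((2:ℂ)^k) * b = n * 2^m := by
      field_simp at hn
      have h1' : (2 * (Real.pi:ℂ) * Complex.I) * (2^k * b)
          = (2 * (Real.pi:ℂ) * Complex.I) * (n * 2^m) := by push_cast at hn; linear_combination (2 * (Real.pi:ℂ) * Complex.I) * hn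
      exact mul_left_cancel₀ hpi h1'
    have keyZ : (2:ℤ)^k * b = n * 2^m := by exact_mod_cast key
    have hdvd : (2:ℤ)^k * 2^(m-k) ∣ 2^k * b := by
      rw [← pow_add]
      have : k + (m - k) = m := by omega
      rw [this]
      exact ⟨n, by linarith [keyZ]⟩
    have hdvd2 : (2:ℤ)^(m-k) ∣ b :=
      (mul_dvd_mul_iff_left (a := (2:ℤ)^k) (pow_ne_zero _ two_ne_zero)).mp hdvd
    have h2b : (2:ℤ) ∣ b := dvd_trans (dvd_pow_self 2 (by omega : m - k ≠ 0)) hdvd2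
    obtain ⟨c, hc⟩ := h2b
    obtain ⟨d, hd⟩ := hb
    omega
  · intro hmk
    refine ⟨2^(k-m) * b, ?_⟩
    have hke : (2:ℂ)^k = 2^(k-m) * 2^m := by
      rw [← pow_add]; congr 1; omega
    push_cast
    field_simp
    rw [hke]; ring

lemma isUnit_five (e : ℕ) [NeZero (2^e)] : IsUnit (5 : ZMod (2^e)) := by
  have : ((5:ℕ) : ZMod (2^e)) = (5 : ZMod (2^e)) := by push_cast; ring
  rw [← this, ZMod.isUnit_iff_coprime]
  exact Nat.Coprime.pow_right _ (by decide)

lemma units_structure (e : ℕ) (he : 3 ≤ e) (x : (ZMod (2^e))ˣ) :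
    ∃ j : ℕ, (x : ZMod (2^e)) = 5^j ∨ (x : ZMod (2^e)) = -(5^j) := by
  haveI : NeZero (2^e) := ⟨pow_ne_zero _ two_ne_zero⟩
  set u5 : (ZMod (2^e))ˣ := (isUnit_five e).unit with hu5
  have hu5c : (u5 : ZMod (2^e)) = 5 := (isUnit_five e).unit_spec
  have hpow : ∀ k : ℕ, u5 ^ k = 1 ↔ 2^(e-2) ∣ k := by
    intro k
    rw [Units.ext_iff, Units.val_pow_eq_pow_val, hu5c, Units.val_one]
    exact five_pow_eq_one_iff' e k
  have hord : orderOf u5 = 2^(e-2) :=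
    Nat.dvd_antisymm (orderOf_dvd_iff_pow_eq_one.mpr ((hpow _).mpr dvd_rfl))
      ((hpow _).mp (pow_orderOf_eq_one u5))
  let f : Fin 2 × Fin (2^(e-2)) → (ZMod (2^e))ˣ := fun p => (-1)^(p.1 : ℕ) * u5^(p.2 : ℕ)
  have h4dvd : (4:ℕ) ∣ 2^e := by
    have h : (4:ℕ) = 2^2 := by norm_num
    rw [h]; exact pow_dvd_pow 2 (by omega)
  have hnotneg : ∀ j j' : ℕ, u5 ^ j ≠ - u5 ^ j' := by
    intro j j' hcon
    have hz : ((5:ZMod (2^e))^j) = -(5^j') := by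
      have := congrArg (Units.val) hcon
      simpa [hu5c] using this
    have h4 := congrArg (ZMod.castHom h4dvd (ZMod 4)) hz
    have h5cast : (ZMod.castHom h4dvd (ZMod 4)) (5 : ZMod (2^e)) = 1 := by
      have h5 : (5 : ZMod (2^e)) = ((5:ℕ) : ZMod (2^e)) := by push_cast; ring
      rw [h5, map_natCast]; decide
    rw [map_pow, map_neg, map_pow, h5cast, one_pow, one_pow] at h4
    exact absurd h4 (by decide)
  have hj : ∀ j j' : Fin (2^(e-2)), u5 ^ (j:ℕ) = u5 ^ (j':ℕ) → j = j' := by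
    intro j j' h
    exact Fin.ext (pow_injOn_Iio_orderOf (by rw [hord]; exact j.2) (by rw [hord]; exact j'.2) h)
  have hinj : Function.Injective f := by
    rintro ⟨i, j⟩ ⟨i', j'⟩ heq
    simp only [f] at heq
    fin_cases i <;> fin_cases i' <;>
      simp only [Fin.val_zero, Fin.val_one, pow_zero, pow_one, one_mul, neg_one_mul] at heq
    · exact Prod.ext rfl (hj _ _ heq)
    · exact absurd heq (hnotneg _ _)
    · exact absurd heq.symm (hnotneg _ _)
    · exact Prod.ext rfl (hj _ _ (neg_injective heq))
  have hcard : Fintype.card (Fin 2 × Fin (2^(e-2))) = Fintype.card ((ZMod (2^e))ˣ) := by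
    rw [ZMod.card_units_eq_totient, Nat.totient_prime_pow Nat.prime_two (by omega : 0 < e)]
    simp [Fintype.card_prod]
    rw [← pow_succ']
    congr 1
    omega
  have hsurj : Function.Surjective f :=
    ((Fintype.bijective_iff_injective_and_card f).mpr ⟨hinj, hcard⟩).2
  obtain ⟨⟨i, j⟩, hij⟩ := hsurj x
  refine ⟨j, ?_⟩
  have := congrArg Units.val hij
  simp only [f, Units.val_mul, Units.val_pow_eq_pow_val, hu5c] at this
  fin_cases i <;> simp only [Fin.val_zero, Fin.val_one, pow_zero, pow_one, one_mul] at this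
  · exact Or.inl this.symm
  · right
    rw [← this]
    push_cast
    ring

lemma cast_five {m n : ℕ} (h : m ∣ n) [NeZero n] :
    (ZMod.castHom h (ZMod m)) (5 : ZMod n) = (5 : ZMod m) := by
  have h5 : (5 : ZMod n) = ((5:ℕ) : ZMod n) := by push_cast; ring
  rw [h5, map_natCast]
  push_cast; ring

lemma factorsThrough_of_five (e t : ℕ) (he : 3 ≤ e) (ht : 2 ≤ t) (hte : t ≤ e)
    (χ : DirichletCharacter ℂ (2^e)) (hχ : χ (5 : ZMod (2^e)) ^ (2^(t-2)) = 1) :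
    χ.FactorsThrough (2^t) := by
  haveI : NeZero (2^e) := ⟨pow_ne_zero _ two_ne_zero⟩
  have hd : (2:ℕ)^t ∣ 2^e := pow_dvd_pow 2 hte
  rw [DirichletCharacter.factorsThrough_iff_ker_unitsMap hd]
  intro x hx
  rw [MonoidHom.mem_ker] at hx ⊢
  have hx' : (ZMod.castHom hd (ZMod (2^t))) (x : ZMod (2^e)) = 1 := by
    have := congrArg Units.val hx
    simpa [ZMod.unitsMap_def] using this
  obtain ⟨j, hj | hj⟩ := units_structure e he x
  · rw [hj, map_pow, cast_five] at hx'
    obtain ⟨c, hc⟩ := (five_pow_eq_one_iff' t j).mp hx'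
    rw [Units.ext_iff, MulChar.coe_toUnitHom, Units.val_one, hj, map_pow, hc, pow_mul, hχ, one_pow]
  · exfalso
    rw [hj, map_neg, map_pow, cast_five] at hx'
    have h4dvd : (4:ℕ) ∣ 2^t := by
      have h : (4:ℕ) = 2^2 := by norm_num
      rw [h]; exact pow_dvd_pow 2 ht
    haveI : NeZero (2^t) := ⟨pow_ne_zero _ two_ne_zero⟩
    have h4 := congrArg (ZMod.castHom h4dvd (ZMod 4)) hx'
    rw [map_neg, map_pow, cast_five, map_one] at h4
    have : (5 : ZMod 4) = 1 := by decide
    rw [this, one_pow] at h4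
    exact absurd h4 (by decide)

lemma five_pow_of_factorsThrough (e t : ℕ) (hte : t ≤ e)
    (χ : DirichletCharacter ℂ (2^e)) (h : χ.FactorsThrough (2^t)) :
    χ (5 : ZMod (2^e)) ^ (2^(t-2)) = 1 := by
  haveI : NeZero (2^e) := ⟨pow_ne_zero _ two_ne_zero⟩
  have hd : (2:ℕ)^t ∣ 2^e := pow_dvd_pow 2 hte
  rw [DirichletCharacter.factorsThrough_iff_ker_unitsMap hd] at h
  have hu5 := (isUnit_five e)
  have hmem : (hu5.unit)^(2^(t-2)) ∈ (ZMod.unitsMap hd).ker := by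
    rw [MonoidHom.mem_ker, Units.ext_iff, map_pow]
    have hval : ((ZMod.unitsMap hd) hu5.unit : ZMod (2^t)) = 5 := by
      rw [ZMod.unitsMap_def]
      simp only [Units.coe_map, MonoidHom.coe_coe]
      rw [hu5.unit_spec, cast_five]
    rw [Units.val_pow_eq_pow_val, hval, Units.val_one]
    exact (five_pow_eq_one_iff' t _).mpr dvd_rfl
  have hker := h hmem
  rw [MonoidHom.mem_ker, Units.ext_iff] at hker
  rw [map_pow, Units.val_pow_eq_pow_val, MulChar.coe_toUnitHom, hu5.unit_spec,
    Units.val_one] at hker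
  exact hker

lemma conductor_eq_pow (e s : ℕ) (he : 3 ≤ e) (hs : 2 ≤ s) (hse : s ≤ e)
    (χ : DirichletCharacter ℂ (2^e)) (hfac : χ (5 : ZMod (2^e)) ^ 2^(s-2) = 1)
    (hlow : ∀ t, t < s → χ (5 : ZMod (2^e)) ^ 2^(t-2) ≠ 1) : χ.conductor = 2^s := by
  have hmem : (2:ℕ)^s ∈ χ.conductorSet := factorsThrough_of_five e s he hs hse χ hfac
  refine le_antisymm (Nat.sInf_le hmem) ?_
  have hc := χ.factorsThrough_conductor
  obtain ⟨t, hte, hct⟩ := (Nat.dvd_prime_pow Nat.prime_two).mp χ.conductor_dvd_level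
  rw [hct]
  have h5 := five_pow_of_factorsThrough e t hte χ (hct ▸ hc)
  by_contra hlt
  push_neg at hlt
  have : t < s := by
    by_contra h
    push_neg at h
    exact absurd (pow_le_pow_right₀ one_le_two h) (not_le.mpr hlt)
  exact hlow t this h5

set_option maxHeartbeats 1000000 in
open Complex in
/-- Let `e ≥ 4` be odd and `χ` a Dirichlet character modulo `2^e` of
conductor `2^s` with `3 ≤ s ≤ (e-3)/2`. Write `χ(5) = e(a/2^{s-2})` for the unique odd
`a ∈ [1, 2^{s-2})`, and define `ψ` mod `2^e` by `ψ(-1) = 1` and `ψ(5) = e(-a/2^{s-1})`.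
Then `χψ²` has conductor at most `4`, `cond(ψ) = cond(χψ) = 2^{s+1}`, and
`ord₂(cond ψ) + ord₂(cond χψ) = 2s + 2 < e`. -/
theorem twist_to_minimal_two (e s : ℕ) (he : Odd e) (he4 : 4 ≤ e)
    (χ : DirichletCharacter ℂ (2 ^ e)) (hcond : χ.conductor = 2 ^ s)
    (hs : 3 ≤ s) (hs' : s ≤ (e - 3) / 2)
    (a : ℕ) (ha : Odd a) (ha1 : 1 ≤ a) (ha2 : a < 2 ^ (s - 2))
    (hχ5 : χ (5 : ZMod (2 ^ e)) =
      Complex.exp (2 * Real.pi * Complex.I * (a : ℂ) / (2 : ℂ) ^ (s - 2)))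
    (ψ : DirichletCharacter ℂ (2 ^ e))
    (hψneg : ψ (-1 : ZMod (2 ^ e)) = 1)
    (hψ5 : ψ (5 : ZMod (2 ^ e)) =
      Complex.exp (-(2 * Real.pi * Complex.I * (a : ℂ)) / (2 : ℂ) ^ (s - 1))) :
    (χ * ψ ^ 2).conductor ≤ 4 ∧
      ψ.conductor = 2 ^ (s + 1) ∧ (χ * ψ).conductor = 2 ^ (s + 1) ∧
      padicValNat 2 ψ.conductor + padicValNat 2 (χ * ψ).conductor = 2 * s + 2 ∧
      2 * s + 2 < e := by
  haveI : NeZero (2^e) := ⟨pow_ne_zero _ two_ne_zero⟩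
  have hlt : 2 * s + 2 < e := by omega
  have he3 : 3 ≤ e := by omega
  have hse : s + 1 ≤ e := by omega
  have haZ : Odd (a : ℤ) := Int.odd_coe_nat a |>.mpr ha
  have hanZ : Odd (-(a : ℤ)) := haZ.neg
  have h2s2 : ((2:ℂ))^(s-1) = 2^(s-2) * 2 := by
    rw [← pow_succ]; congr 1; omega
  have h2ne : ((2:ℂ))^(s-2) ≠ 0 := pow_ne_zero _ two_ne_zero
  have h2ne' : ((2:ℂ))^(s-1) ≠ 0 := pow_ne_zero _ two_ne_zero
  -- rewrite values into the canonical form of root_pow_eq_one_iff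
  have hχ5' : χ (5 : ZMod (2 ^ e)) =
      Complex.exp (2 * Real.pi * Complex.I * (Int.cast ((a:ℤ)) : ℂ) / (2:ℂ)^(s-2)) := by
    rw [hχ5]; push_cast; ring_nf
  have hψ5' : ψ (5 : ZMod (2 ^ e)) =
      Complex.exp (2 * Real.pi * Complex.I * (Int.cast (-(a:ℤ)) : ℂ) / (2:ℂ)^(s-1)) := by
    rw [hψ5]; congr 1; push_cast; ring
  -- value of χψ
  have hmul : (χ * ψ) (5 : ZMod (2 ^ e)) =
      Complex.exp (2 * Real.pi * Complex.I * (Int.cast ((a:ℤ)) : ℂ) / (2:ℂ)^(s-1)) := by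
    rw [MulChar.mul_apply, hχ5', hψ5', ← Complex.exp_add]
    congr 1
    field_simp
    rw [h2s2]
    push_cast; ring
  -- value of χψ²
  have hmul2 : (χ * ψ^2) (5 : ZMod (2 ^ e)) = 1 := by
    rw [MulChar.mul_apply, MulChar.pow_apply' ψ two_ne_zero, hχ5', hψ5', ← Complex.exp_nat_mul,
      ← Complex.exp_add]
    rw [show ((2:ℕ):ℂ) = (2:ℂ) by norm_num]
    have : 2 * Real.pi * Complex.I * (Int.cast ((a:ℤ)) : ℂ) / (2:ℂ)^(s-2)
        + 2 * (2 * Real.pi * Complex.I * (Int.cast (-(a:ℤ)) : ℂ) / (2:ℂ)^(s-1)) = 0 := by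
      field_simp
      rw [h2s2]
      push_cast; ring
    rw [this, Complex.exp_zero]
  refine ⟨?_, ?_, ?_, ?_, hlt⟩
  · -- conductor (χψ²) ≤ 4
    have hft : (χ * ψ^2).FactorsThrough (2^2) := by
      apply factorsThrough_of_five e 2 he3 le_rfl (by omega)
      rw [hmul2, one_pow]
    have h4 : (2:ℕ)^2 = 4 := by norm_num
    exact le_trans (Nat.sInf_le (h4 ▸ hft)) (by norm_num)
  · -- conductor ψ = 2^(s+1)
    apply conductor_eq_pow e (s+1) he3 (by omega) hse
    · rw [hψ5']
      rw [show s + 1 - 2 = s - 1 by omega]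
      exact (root_pow_eq_one_iff (-(a:ℤ)) hanZ (s-1) (s-1)).mpr le_rfl
    · intro t ht
      rw [hψ5']
      intro hcon
      have := (root_pow_eq_one_iff (-(a:ℤ)) hanZ (s-1) (t-2)).mp hcon
      omega
  · -- conductor χψ = 2^(s+1)
    apply conductor_eq_pow e (s+1) he3 (by omega) hse
    · rw [hmul]
      rw [show s + 1 - 2 = s - 1 by omega]
      exact (root_pow_eq_one_iff ((a:ℤ)) haZ (s-1) (s-1)).mpr le_rfl
    · intro t ht
      rw [hmul]
      intro hcon
      have := (root_pow_eq_one_iff ((a:ℤ)) haZ (s-1) (t-2)).mp hcon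
      omega
  · -- padicValNat
    have hψc : ψ.conductor = 2^(s+1) := by
      apply conductor_eq_pow e (s+1) he3 (by omega) hse
      · rw [hψ5', show s + 1 - 2 = s - 1 by omega]
        exact (root_pow_eq_one_iff (-(a:ℤ)) hanZ (s-1) (s-1)).mpr le_rfl
      · intro t ht
        rw [hψ5']
        intro hcon
        have := (root_pow_eq_one_iff (-(a:ℤ)) hanZ (s-1) (t-2)).mp hcon
        omega
    have hχψc : (χ * ψ).conductor = 2^(s+1) := by
      apply conductor_eq_pow e (s+1) he3 (by omega) hse
      · rw [hmul, show s + 1 - 2 = s - 1 by omega]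
        exact (root_pow_eq_one_iff ((a:ℤ)) haZ (s-1) (s-1)).mpr le_rfl
      · intro t ht
        rw [hmul]
        intro hcon
        have := (root_pow_eq_one_iff ((a:ℤ)) haZ (s-1) (t-2)).mp hcon
        omega
    rw [hψc, hχψc, padicValNat.prime_pow]
    omega
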